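/- arXiv:math/0702324 — 3 statements merged into one kernel-verified Lean document; each statement's English description precedes it below -/
import Mathlib

section
/- For every natural number ℓ ≥ 0 there exist real polynomials φ and λ in one variable such that (t-1)·φ(t)² + 1 = t^(ℓ+1)·λ(t) for all t, the degree of λ equals ℓ, and φ(t) > 0 for all t ≥ 0. -/
open Finset Polynomial

noncomputable def cc : ℕ → ℝ := fun n => (Nat.centralBinom n : ℝ) / 4 ^ n

lemma cc_pos (n : ℕ) : 0 < cc n :=
  div_pos (by exact_mod_cast Nat.centralBinom_pos n) (by positivity)

lemma cc_zero : cc 0 = 1 := by simp [cc, Nat.centralBinom]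

lemma cc_rec (n : ℕ) : 2 * ((n : ℝ) + 1) * cc (n + 1) = (2 * n + 1) * cc n := by
  have h := Nat.succ_mul_centralBinom_succ n
  have h' : ((n : ℝ) + 1) * (Nat.centralBinom (n + 1) : ℝ)
      = 2 * (2 * n + 1) * (Nat.centralBinom n : ℝ) := by exact_mod_cast h
  have h4 : (4 : ℝ) ^ (n + 1) = 4 * 4 ^ n := by ring
  simp only [cc, h4]
  have hp : (0:ℝ) < 4 ^ n := by positivity
  rw [mul_div_assoc', mul_div_assoc', div_eq_div_iff (by positivity) hp.ne']
  linear_combination 2 * (4:ℝ)^n * h'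

noncomputable def SS : ℕ → ℝ := fun n => ∑ i ∈ range (n + 1), cc i * cc (n - i)

noncomputable def AA : ℕ → ℝ := fun n => ∑ i ∈ range (n + 1), (i : ℝ) * (cc i * cc (n - i))

lemma two_AA (n : ℕ) : 2 * AA n = n * SS n := by
  have hrefl : AA n = ∑ i ∈ range (n + 1), ((n - i : ℕ) : ℝ) * (cc (n - i) * cc i) := by
    rw [AA]
    rw [← Finset.sum_range_reflect (fun i => (i : ℝ) * (cc i * cc (n - i))) (n + 1)]
    refine Finset.sum_congr rfl fun i hi => ?_
    have hin : i ≤ n := Nat.lt_succ_iff.mp (Finset.mem_range.mp hi)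
    have : n + 1 - 1 - i = n - i := by omega
    rw [this, Nat.sub_sub_self hin]
  have : 2 * AA n = AA n + AA n := by ring
  rw [this]
  nth_rewrite 2 [hrefl]
  rw [AA, SS, ← Finset.sum_add_distrib, Finset.mul_sum]
  refine Finset.sum_congr rfl fun i hi => ?_
  have hin : i ≤ n := Nat.lt_succ_iff.mp (Finset.mem_range.mp hi)
  have hc : ((n - i : ℕ) : ℝ) = (n : ℝ) - i := by
    rw [Nat.cast_sub hin]
  rw [hc]; ring

lemma SS_eq_one (n : ℕ) : SS n = 1 := by
  induction n with
  | zero => simp [SS, cc_zero]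
  | succ n ih =>
    have key : ((n : ℝ) + 1) * SS (n + 1) = ((n : ℝ) + 1) * SS n := by
      have h1 : 2 * AA (n + 1) = ((n : ℝ) + 1) * SS (n + 1) := by
        have := two_AA (n + 1); push_cast at this ⊢; linarith
      have h2 : AA (n + 1) = ∑ i ∈ range (n + 1), ((i : ℝ) + 1) * (cc (i + 1) * cc (n - i)) := by
        rw [AA, Finset.sum_range_succ' (fun i => (i : ℝ) * (cc i * cc (n + 1 - i))) (n + 1)]
        simp only [Nat.cast_zero, zero_mul, add_zero]
        refine Finset.sum_congr rfl fun i hi => ?_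
        have : n + 1 - (i + 1) = n - i := by omega
        rw [this]; push_cast; ring
      have h3 : 2 * AA (n + 1) = ∑ i ∈ range (n + 1), (2 * (i : ℝ) + 1) * (cc i * cc (n - i)) := by
        rw [h2, Finset.mul_sum]
        refine Finset.sum_congr rfl fun i hi => ?_
        linear_combination cc (n - i) * cc_rec i
      have h4 : (∑ i ∈ range (n + 1), (2 * (i : ℝ) + 1) * (cc i * cc (n - i)))
          = 2 * AA n + SS n := by
        rw [AA, SS, Finset.mul_sum, ← Finset.sum_add_distrib]
        refine Finset.sum_congr rfl fun i hi => ?_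
        ring
      have h5 := two_AA n
      rw [h1] at h3
      rw [h4, h5] at h3
      rw [h3]; ring
    have hne : ((n : ℝ) + 1) ≠ 0 := by positivity
    have := mul_left_cancel₀ hne key
    rw [this, ih]

noncomputable def phi (ℓ : ℕ) : ℝ[X] := ∑ k ∈ range (ℓ + 1), C (cc k) * X ^ k

lemma coeff_phi (ℓ m : ℕ) : (phi ℓ).coeff m = if m ≤ ℓ then cc m else 0 := by
  rw [phi, finset_sum_coeff]
  simp only [coeff_C_mul, coeff_X_pow, mul_ite, mul_one, mul_zero]
  rw [Finset.sum_ite_eq (range (ℓ + 1)) m (fun k => cc k)]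
  simp [Nat.lt_succ_iff]

lemma eval_phi (ℓ : ℕ) (t : ℝ) : (phi ℓ).eval t = ∑ k ∈ range (ℓ + 1), cc k * t ^ k := by
  simp [phi, eval_finset_sum]

lemma phi_pos (ℓ : ℕ) (t : ℝ) (ht : 0 ≤ t) : 0 < (phi ℓ).eval t := by
  rw [eval_phi]
  apply Finset.sum_pos' (fun i _ => mul_nonneg (cc_pos i).le (pow_nonneg ht i))
  exact ⟨0, Finset.mem_range.mpr (Nat.succ_pos ℓ), by simpa [cc_zero] using cc_pos 0⟩

lemma coeff_phi_sq (ℓ n : ℕ) (hn : n ≤ ℓ) : ((phi ℓ) ^ 2).coeff n = 1 := by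
  rw [sq, coeff_mul, Finset.Nat.sum_antidiagonal_eq_sum_range_succ_mk]
  rw [← SS_eq_one n, SS]
  refine Finset.sum_congr rfl fun i hi => ?_
  have hin : i ≤ n := Nat.lt_succ_iff.mp (Finset.mem_range.mp hi)
  rw [coeff_phi, coeff_phi, if_pos (hin.trans hn), if_pos ((Nat.sub_le n i).trans hn)]

lemma natDegree_phi (ℓ : ℕ) : (phi ℓ).natDegree = ℓ := by
  apply le_antisymm
  · rw [natDegree_le_iff_coeff_eq_zero]
    intro m hm
    rw [coeff_phi, if_neg (by omega)]
  · apply le_natDegree_of_ne_zero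
    rw [coeff_phi, if_pos le_rfl]
    exact (cc_pos ℓ).ne'

theorem stmt_0 (ℓ : ℕ) :
    ∃ φ lam : Polynomial ℝ,
      (∀ t : ℝ, (t - 1) * (φ.eval t) ^ 2 + 1 = t ^ (ℓ + 1) * lam.eval t) ∧
      lam.natDegree = ℓ ∧
      (∀ t : ℝ, 0 ≤ t → 0 < φ.eval t) := by
  set φ := phi ℓ with hφ
  set g : ℝ[X] := (X - 1) * φ ^ 2 + 1 with hg
  have hdvd : X ^ (ℓ + 1) ∣ g := by
    rw [X_pow_dvd_iff]
    intro d hd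
    have hdℓ : d ≤ ℓ := by omega
    rcases Nat.eq_zero_or_pos d with rfl | hdpos
    · simp only [hg, coeff_add, coeff_one, sub_mul, coeff_sub, one_mul, if_pos rfl]
      have h0 : (X * φ ^ 2).coeff 0 = 0 := by simp [mul_coeff_zero]
      rw [h0, coeff_phi_sq ℓ 0 (Nat.zero_le ℓ)]
      simp
    · obtain ⟨e, rfl⟩ : ∃ e, d = e + 1 := ⟨d - 1, by omega⟩
      simp only [hg, coeff_add, coeff_one, sub_mul, coeff_sub, one_mul]
      rw [coeff_X_mul, coeff_phi_sq ℓ e (by omega), coeff_phi_sq ℓ (e + 1) hdℓ]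
      simp
  obtain ⟨lam, hlam⟩ := hdvd
  refine ⟨φ, lam, fun t => ?_, ?_, fun t ht => phi_pos ℓ t ht⟩
  · have := congrArg (Polynomial.eval t) hlam
    simpa [hg] using this
  · have hφne : φ ≠ 0 := by
      intro h
      have h2 := coeff_phi ℓ ℓ
      rw [show phi ℓ = φ from rfl, h] at h2
      simp at h2
      exact absurd h2.symm (cc_pos ℓ).ne'
    have hφ2 : φ ^ 2 ≠ 0 := pow_ne_zero 2 hφne
    have hX1 : (X - 1 : ℝ[X]) = X - C 1 := by simp
    have hgd : g.natDegree = 2 * ℓ + 1 := by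
      have hmul : ((X - C 1 : ℝ[X]) * φ ^ 2).natDegree = 2 * ℓ + 1 := by
        rw [natDegree_mul (X_sub_C_ne_zero 1) hφ2,
          natDegree_pow, hφ, natDegree_phi, natDegree_X_sub_C]
        ring
      rw [hg, hX1, show (1 : ℝ[X]) = C 1 from (map_one C).symm, natDegree_add_C, hmul]
    have hgne : g ≠ 0 := by
      intro h
      have := congrArg (Polynomial.eval 1) h
      simp [hg] at this
    have hlamne : lam ≠ 0 := by
      rintro rfl; rw [mul_zero] at hlam; exact hgne hlam
    have := congrArg Polynomial.natDegree hlam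
    rw [natDegree_mul (pow_ne_zero _ X_ne_zero) hlamne, natDegree_X_pow, hgd] at this
    omega
end

section
/- Let f, g : ℂ^m → ℂ^r be polynomial maps pseudo-homogeneous of order k ≥ 1 and b-orthogonal, and let ρ, β₁, β₂ be polynomials satisfying (t-s)ρ(s,t)² + s^(2k-1) = t^k(β₁(s,t)² + β₂(s,t)²). Define F : ℂ^m × ℂ^ℓ → ℂ^r × ℂ^ℓ by F(z,u) = (β₁(q(z)+q(u), q(z))·f(z) + β₂(q(z)+q(u), q(z))·g(z), ρ(q(z)+q(u), q(z))·u). Then F is pseudo-homogeneous of order 2k-1: q(F(z,u)) = (q(z) + q(u))^(2k-1) for all (z,u). -/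
theorem stmt_12 (m r ℓ k : ℕ) (hk : 1 ≤ k)
    (f g : (Fin m → ℂ) → (Fin r → ℂ))
    (hf : ∀ z, (∑ i, (f z i) ^ 2) = (∑ j, (z j) ^ 2) ^ k)
    (hg : ∀ z, (∑ i, (g z i) ^ 2) = (∑ j, (z j) ^ 2) ^ k)
    (horth : ∀ z, (∑ i, f z i * g z i) = 0)
    (ρ β₁ β₂ : MvPolynomial (Fin 2) ℂ)
    (hid : ∀ s t : ℂ,
      (t - s) * (MvPolynomial.eval ![s, t] ρ) ^ 2 + s ^ (2 * k - 1) =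
        t ^ k * ((MvPolynomial.eval ![s, t] β₁) ^ 2 +
          (MvPolynomial.eval ![s, t] β₂) ^ 2)) :
    ∀ (z : Fin m → ℂ) (u : Fin ℓ → ℂ),
      (∑ i, ((MvPolynomial.eval ![(∑ j, (z j) ^ 2) + (∑ j, (u j) ^ 2), ∑ j, (z j) ^ 2] β₁) * f z i +
             (MvPolynomial.eval ![(∑ j, (z j) ^ 2) + (∑ j, (u j) ^ 2), ∑ j, (z j) ^ 2] β₂) * g z i) ^ 2) +
      (∑ j, ((MvPolynomial.eval ![(∑ j, (z j) ^ 2) + (∑ j, (u j) ^ 2), ∑ j, (z j) ^ 2] ρ) * u j) ^ 2) =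
        ((∑ j, (z j) ^ 2) + (∑ j, (u j) ^ 2)) ^ (2 * k - 1) := by
  intro z u
  have key : ∀ T U : ℂ, (∑ j, (z j) ^ 2) = T → (∑ j, (u j) ^ 2) = U →
      (∑ i, ((MvPolynomial.eval ![T + U, T] β₁) * f z i +
             (MvPolynomial.eval ![T + U, T] β₂) * g z i) ^ 2) +
      (∑ j, ((MvPolynomial.eval ![T + U, T] ρ) * u j) ^ 2) =
        (T + U) ^ (2 * k - 1) := by
    intro T U hT hU
    set B₁ : ℂ := MvPolynomial.eval ![T + U, T] β₁ with hB1
    set B₂ : ℂ := MvPolynomial.eval ![T + U, T] β₂ with hB2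
    set R : ℂ := MvPolynomial.eval ![T + U, T] ρ with hR
    have h1 : (∑ i, (B₁ * f z i + B₂ * g z i) ^ 2)
        = (B₁ ^ 2 + B₂ ^ 2) * T ^ k := by
      have he : ∀ i, (B₁ * f z i + B₂ * g z i) ^ 2
          = B₁ ^ 2 * (f z i) ^ 2 + B₂ ^ 2 * (g z i) ^ 2
            + 2 * B₁ * B₂ * (f z i * g z i) := by intro i; ring
      simp_rw [he, Finset.sum_add_distrib, ← Finset.mul_sum, hf, hg, horth, hT]
      ring
    have h2 : (∑ j, (R * u j) ^ 2) = R ^ 2 * U := by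
      simp_rw [mul_pow, ← Finset.mul_sum, hU]
    have hid' := hid (T + U) T
    rw [h1, h2]
    rw [← hB1, ← hB2, ← hR] at hid'
    linear_combination -hid'
  exact key _ _ rfl rfl
end

section
/- If φ : ℂ^(n+1) → ℂ^(n+1) is pseudo-homogeneous of even order and n is even, then the restriction φ : Q^n → Q^n is homotopic to φ∘(-Id) : Q^n → Q^n, where -Id(z) = -z; in particular φ|_{Q^n} is homotopic to its own precomposition with the antipodal map of Q^n. -/
theorem stmt_19 (n rr : ℕ) (hn : Even n)
    (φ : (Fin (n + 1) → ℂ) → (Fin (n + 1) → ℂ)) (hφc : Continuous φ)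
    (hφ : ∀ z, (∑ i, (φ z i) ^ 2) = (∑ j, (z j) ^ 2) ^ (2 * rr)) :
    ∃ F G : C({z : Fin (n + 1) → ℂ // (∑ j, (z j) ^ 2) = 1},
              {z : Fin (n + 1) → ℂ // (∑ j, (z j) ^ 2) = 1}),
      (∀ z, (F z : Fin (n + 1) → ℂ) = φ z) ∧
      (∀ z, (G z : Fin (n + 1) → ℂ) = φ (-(z : Fin (n + 1) → ℂ))) ∧
      F.Homotopic G := by
  have hsum : ∀ (c : ℂ) (z : Fin (n + 1) → ℂ),
      (∑ j, (c • z) j ^ 2) = c ^ 2 * ∑ j, z j ^ 2 := by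
    intro c z
    simp [Finset.mul_sum, mul_pow]
  have hmem : ∀ (c : ℂ), c ≠ 0 → ∀ z : Fin (n + 1) → ℂ, (∑ j, z j ^ 2) = 1 →
      (∑ i, ((c⁻¹ ^ (2 * rr)) • φ (c • z)) i ^ 2) = 1 := by
    intro c hc z hz
    simp only [Pi.smul_apply, smul_eq_mul, mul_pow]
    rw [← Finset.mul_sum, hφ, hsum, hz, mul_one]
    field_simp
    ring_nf
    rw [← mul_pow, mul_inv_cancel₀ hc, one_pow]
  have hF : ∀ z : Fin (n + 1) → ℂ, (∑ j, z j ^ 2) = 1 → (∑ i, φ z i ^ 2) = 1 := by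
    intro z hz; rw [hφ, hz, one_pow]
  have hG : ∀ z : Fin (n + 1) → ℂ, (∑ j, z j ^ 2) = 1 → (∑ i, φ (-z) i ^ 2) = 1 := by
    intro z hz
    rw [hφ]
    have : (∑ j, (-z) j ^ 2) = ∑ j, z j ^ 2 := by simp
    rw [this, hz, one_pow]
  refine ⟨⟨fun z => ⟨φ z, hF z z.2⟩, ?_⟩, ⟨fun z => ⟨φ (-(z : Fin (n+1) → ℂ)), hG z z.2⟩, ?_⟩,
    fun z => rfl, fun z => rfl, ?_⟩
  · exact (hφc.comp continuous_subtype_val).subtype_mk _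
  · exact (hφc.comp continuous_subtype_val.neg).subtype_mk _
  · -- the homotopy
    set γ : unitInterval → ℂ := fun t => Complex.exp (Real.pi * Complex.I * (t : ℝ)) with hγdef
    have hγc : Continuous γ := by
      apply Complex.continuous_exp.comp
      continuity
    have hγne : ∀ t, γ t ≠ 0 := fun t => Complex.exp_ne_zero _
    have hγ0 : γ 0 = 1 := by simp [hγdef]
    have hγ1 : γ 1 = -1 := by
      simp only [hγdef, Set.Icc.coe_one, Complex.ofReal_one, mul_one]
      exact Complex.exp_pi_mul_I
    refine ⟨⟨⟨fun p => ⟨(γ p.1)⁻¹ ^ (2 * rr) • φ (γ p.1 • (p.2 : Fin (n+1) → ℂ)),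
        hmem _ (hγne _) _ p.2.2⟩, ?_⟩, ?_, ?_⟩⟩
    · apply Continuous.subtype_mk
      exact (((hγc.comp continuous_fst).inv₀ fun p => hγne _).pow _).smul
        (hφc.comp ((hγc.comp continuous_fst).smul
          (continuous_subtype_val.comp continuous_snd)))
    · intro z
      ext1
      simp [hγ0]
    · intro z
      ext1
      have h2 : ((-1 : ℂ))⁻¹ ^ (2 * rr) = 1 := by
        rw [inv_neg_one]
        exact Even.neg_one_pow (even_two_mul rr)
      simp [hγ1, h2, neg_smul, one_smul]
end
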